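/- In the smart voting model, every consistent certificate determines a unique outcome: if a certificate c for a profile B of valid smart ballots is consistent via an enumeration σ and also via an enumeration σ', then the total assignments in D^N produced by the iterative vote-determination process along σ and along σ' are equal. -/
import Mathlib


namespace SmartVoting

/-- A smart ballot for agent `a`: levels `1, …, k-1` are delegations `(S h, F h)`
(with `a ∉ S h` and `F h` depending only on the votes of the members of `S h`),
and level `k` is the backup direct vote. -/
structure SmartBallot (N D : Type*) (a : N) where
  k : ℕ
  k_pos : 1 ≤ k
  S : ℕ → Finset N
  F : ℕ → (N → D) → D
  vote : D
  no_self : ∀ h, 1 ≤ h → h < k → a ∉ S h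
  local_dep : ∀ h, 1 ≤ h → h < k →
    ∀ Y Y' : N → D, (∀ s ∈ S h, Y s = Y' s) → F h Y = F h Y'

variable {N D : Type*} [Fintype N] [DecidableEq N]

/-- `c` is a certificate for the profile `B`. -/
def IsCertificate (B : ∀ a : N, SmartBallot N D a) (c : N → ℕ) : Prop :=
  ∀ a, 1 ≤ c a ∧ c a ≤ (B a).k

/-- `c` is consistent via the enumeration `σ`, producing the total outcome `X`:
in the iterative process along `σ`, each agent `a` gets its direct vote if
`c a = k_a`, and otherwise the necessary winner of its level-`c a` delegation at
the partial assignment built so far (the restriction of `X` to the σ-predecessors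
of `a`), which is required to exist. -/
def ConsistentVia (B : ∀ a : N, SmartBallot N D a) (c : N → ℕ)
    (σ : Fin (Fintype.card N) ≃ N) (X : N → D) : Prop :=
  ∀ a : N,
    (c a = (B a).k → X a = (B a).vote) ∧
    (c a < (B a).k →
      ∀ Y : N → D, (∀ b : N, σ.symm b < σ.symm a → Y b = X b) →
        (B a).F (c a) Y = X a)

/-- Every consistent certificate determines a unique outcome: if `c` is consistent
via `σ` with outcome `X` and via `σ'` with outcome `X'`, then `X = X'`. -/
theorem consistent_certificate_unique_outcome
    (B : ∀ a : N, SmartBallot N D a) (c : N → ℕ) (hc : IsCertificate B c)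
    (σ σ' : Fin (Fintype.card N) ≃ N) (X X' : N → D)
    (h : ConsistentVia B c σ X) (h' : ConsistentVia B c σ' X') :
    X = X' := by
  have key : ∀ n : ℕ, ∀ a : N, (σ.symm a : ℕ) = n → X a = X' a := by
    intro n
    induction n using Nat.strong_induction_on with
    | _ n ih =>
      intro a hn
      rcases lt_or_eq_of_le (hc a).2 with hlt | heq
      · set Y : N → D := fun b => if (σ.symm b : ℕ) < n then X b else X' b with hY
        have e1 : (B a).F (c a) Y = X a := by
          refine (h a).2 hlt Y fun b hb => ?_
          simp only [hY]
          rw [if_pos (hn ▸ hb)]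
        have e2 : (B a).F (c a) Y = X' a := by
          refine (h' a).2 hlt Y fun b _ => ?_
          simp only [hY]
          by_cases hb : (σ.symm b : ℕ) < n
          · rw [if_pos hb, ih _ hb b rfl]
          · rw [if_neg hb]
        rw [← e1, e2]
      · rw [(h a).1 heq, (h' a).1 heq]
  funext a
  exact key _ a rfl

end SmartVoting
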